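/- arXiv:2007.13995 — 2 statements merged into one kernel-verified Lean document; each statement's English description precedes it below -/
import Mathlib

section
/- The square of the generating series Σ_{l ≥ 0} h_l(x_1,…,x_n) decomposes as (Σ_l h_l)² = Σ_{λ: ℓ(λ) ≤ 2} (λ_1 - λ_2 + 1)·s_λ(x_1,…,x_n), i.e., the product h_{a}·h_{b} summed over all a,b ≥ 0 expands with the Schur polynomial s_{(λ_1,λ_2)} appearing with multiplicity λ_1 - λ_2 + 1. -/
open MvPowerSeries

/-- Product topology on formal power series (coefficientwise convergence). -/
noncomputable instance {σ : Type*} : TopologicalSpace (MvPowerSeries σ ℚ) :=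
  inferInstanceAs (TopologicalSpace ((σ →₀ ℕ) → ℚ))

/-- The complete homogeneous symmetric polynomial `h_l(x_1,…,x_n)` in `ℚ[[x_1,…,x_n]]`. -/
noncomputable def hsym (n l : ℕ) : MvPowerSeries (Fin n) ℚ :=
  ∑ d ∈ Finset.Nat.antidiagonalTuple n l, ∏ i, (X i : MvPowerSeries (Fin n) ℚ) ^ d i

/-- `h_l` for an integer index, with `h_l = 0` for `l < 0`. -/
noncomputable def hsymZ (n : ℕ) (l : ℤ) : MvPowerSeries (Fin n) ℚ :=
  if l < 0 then 0 else hsym n l.toNat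

/-- The Schur polynomial of a two-row partition `(λ₁, λ₂)`, via Jacobi–Trudi:
`s_{(λ₁,λ₂)} = h_{λ₁}h_{λ₂} - h_{λ₁+1}h_{λ₂-1}`. -/
noncomputable def schur2 (n : ℕ) (l1 l2 : ℕ) : MvPowerSeries (Fin n) ℚ :=
  hsymZ n l1 * hsymZ n l2 - hsymZ n ((l1 : ℤ) + 1) * hsymZ n ((l2 : ℤ) - 1)

namespace SqTsumHsymAux

noncomputable instance {σ : Type*} : T2Space (MvPowerSeries σ ℚ) :=
  inferInstanceAs (T2Space ((σ →₀ ℕ) → ℚ))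

open Finsupp

variable {n : ℕ}

/-- Total degree of a monomial exponent. -/
def deg (u : Fin n →₀ ℕ) : ℕ := ∑ i, u i

lemma deg_add (u v : Fin n →₀ ℕ) : deg (u + v) = deg u + deg v := by
  simp [deg, Finset.sum_add_distrib]

lemma prodX (d : Fin n → ℕ) :
    (∏ i, (X i : MvPowerSeries (Fin n) ℚ) ^ d i)
      = monomial (Finsupp.equivFunOnFinite.symm d) 1 := by
  have key : ∀ s : Finset (Fin n),
      (∏ i ∈ s, (X i : MvPowerSeries (Fin n) ℚ) ^ d i)
        = monomial (∑ i ∈ s, Finsupp.single i (d i)) 1 := by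
    intro s
    induction s using Finset.induction_on with
    | empty => simp
    | insert a s h ih =>
      rw [Finset.prod_insert h, Finset.sum_insert h, ih, X_pow_eq, monomial_mul_monomial, one_mul]
  rw [key]
  have : (∑ i, Finsupp.single i (d i)) = Finsupp.equivFunOnFinite.symm d := by
    ext j
    rw [Finsupp.finset_sum_apply]
    simp [Finsupp.single_apply]
  rw [this]

lemma coeff_hsym (l : ℕ) (m : Fin n →₀ ℕ) :
    coeff m (hsym n l) = if deg m = l then 1 else 0 := by
  classical
  unfold hsym
  rw [map_sum]
  simp_rw [prodX, coeff_monomial]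
  have h1 : ∀ d : Fin n → ℕ,
      (m = Finsupp.equivFunOnFinite.symm d) ↔ (d = Finsupp.equivFunOnFinite m) := by
    intro d
    rw [Equiv.eq_symm_apply, eq_comm]
  simp_rw [if_congr (h1 _) rfl rfl]
  rw [Finset.sum_ite_eq' (Finset.Nat.antidiagonalTuple n l) (Finsupp.equivFunOnFinite m)
    (fun _ => (1 : ℚ))]
  have h2 : (Finsupp.equivFunOnFinite m ∈ Finset.Nat.antidiagonalTuple n l) ↔ deg m = l := by
    rw [Finset.Nat.mem_antidiagonalTuple]
    rfl
  simp [h2]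

lemma coeff_hsymZ (l : ℤ) (m : Fin n →₀ ℕ) :
    coeff m (hsymZ n l) = if (deg m : ℤ) = l then 1 else 0 := by
  unfold hsymZ
  split_ifs with h1 h2 h3
  · exfalso; omega
  · rfl
  · rw [coeff_hsym, if_pos (by omega)]
  · rw [coeff_hsym, if_neg (by omega)]

/-- The power series all of whose coefficients are `1`. -/
def ones (n : ℕ) : MvPowerSeries (Fin n) ℚ := fun _ => 1

lemma coeff_ones (m : Fin n →₀ ℕ) : coeff m (ones n) = 1 := rfl

lemma hasSum_coeff {ι : Type*} (f : ι → MvPowerSeries (Fin n) ℚ) (F : MvPowerSeries (Fin n) ℚ)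
    (h : ∀ m, HasSum (fun i => coeff m (f i)) (coeff m F)) : HasSum f F :=
  Pi.hasSum.mpr h

lemma hasSum_hsym (n : ℕ) : HasSum (fun l => hsym n l) (ones n) := by
  apply hasSum_coeff
  intro m
  have hv : ∀ l ∉ ({deg m} : Finset ℕ), coeff m (hsym n l) = 0 := by
    intro l hl
    rw [coeff_hsym, if_neg (by simpa [eq_comm] using hl)]
  have := hasSum_sum_of_ne_finset_zero hv (L := SummationFilter.unconditional _)
  simpa [coeff_hsym, coeff_ones] using this

/-- Counting coefficients for products of `hsymZ`'s. -/
noncomputable def N (m : Fin n →₀ ℕ) (x y : ℤ) : ℚ :=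
  ∑ p ∈ Finset.HasAntidiagonal.antidiagonal m,
    (if (deg p.1 : ℤ) = x then 1 else 0) * (if (deg p.2 : ℤ) = y then 1 else 0)

lemma coeff_hsymZ_mul (x y : ℤ) (m : Fin n →₀ ℕ) :
    coeff m (hsymZ n x * hsymZ n y) = N m x y := by
  classical
  rw [coeff_mul]
  unfold N
  refine Finset.sum_congr rfl fun p _ => ?_
  rw [coeff_hsymZ, coeff_hsymZ]

lemma coeff_schur2 (a b : ℕ) (m : Fin n →₀ ℕ) :
    coeff m (schur2 n a b) = N m a b - N m ((a : ℤ) + 1) ((b : ℤ) - 1) := by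
  unfold schur2
  rw [map_sub, coeff_hsymZ_mul, coeff_hsymZ_mul]

lemma N_eq_zero {m : Fin n →₀ ℕ} {x y : ℤ} (h : x + y ≠ (deg m : ℤ)) : N m x y = 0 := by
  unfold N
  refine Finset.sum_eq_zero fun p hp => ?_
  rw [Finset.HasAntidiagonal.mem_antidiagonal] at hp
  have hdeg : deg p.1 + deg p.2 = deg m := by rw [← deg_add, hp]
  split_ifs with h1 h2
  · exfalso; omega
  all_goals ring

/-- The coefficient `λ₁ - λ₂ + 1` for the pair `(M - b, b)`. -/
noncomputable def cQ (M b : ℕ) : ℚ := ((M - b : ℕ) : ℚ) - b + 1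

/-- The net multiplicity function arising from telescoping. -/
noncomputable def w (M d : ℕ) : ℚ :=
  (if d ≤ M / 2 then cQ M d else 0) - (if d + 1 ≤ M / 2 then cQ M (d + 1) else 0)

lemma w_add {M d e : ℕ} (h : d + e = M) : w M d + w M e = 2 := by
  unfold w cQ
  split_ifs with h1 h2 h3 h4 h5 h6 h7 h8 h9 h10 <;> try (exfalso; omega)
  all_goals
    simp only [show M - d = e from by omega, show M - e = d from by omega,
               show M - (d+1) = e - 1 from by omega, show M - (e+1) = d - 1 from by omega]
  all_goals try rw [Nat.cast_sub (show 1 ≤ e from by omega)]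
  all_goals try rw [Nat.cast_sub (show 1 ≤ d from by omega)]
  all_goals try push_cast
  all_goals
    first
      | ring1
      | (have hq : (e:ℚ) = (d:ℚ) + 1 := by exact_mod_cast (show e = d + 1 by omega)
         linarith)
      | (have hq : (d:ℚ) = (e:ℚ) + 1 := by exact_mod_cast (show d = e + 1 by omega)
         linarith)

lemma w_def' (M d : ℕ) :
    (if d ∈ Finset.range (M / 2 + 1) then cQ M d else 0)
      - (if d + 1 ∈ Finset.range (M / 2 + 1) then cQ M (d + 1) else 0) = w M d := by
  simp only [Finset.mem_range, Nat.lt_succ_iff, w]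

lemma sum_w (m : Fin n →₀ ℕ) :
    ∑ p ∈ Finset.HasAntidiagonal.antidiagonal m, w (deg m) (deg p.2)
      = ((Finset.HasAntidiagonal.antidiagonal m).card : ℚ) := by
  have hswap : ∑ p ∈ Finset.HasAntidiagonal.antidiagonal m, w (deg m) (deg p.2)
      = ∑ p ∈ Finset.HasAntidiagonal.antidiagonal m, w (deg m) (deg p.1) := by
    refine Finset.sum_equiv (Equiv.prodComm _ _) (fun p => ?_) (fun p _ => rfl)
    simp only [Finset.HasAntidiagonal.mem_antidiagonal, Equiv.prodComm_apply, Prod.fst_swap, Prod.snd_swap]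
    constructor <;> intro hh <;> rw [← hh] <;> exact (add_comm _ _)
  have key : ∀ p ∈ Finset.HasAntidiagonal.antidiagonal m,
      w (deg m) (deg p.2) + w (deg m) (deg p.1) = 2 := by
    intro p hp
    rw [Finset.HasAntidiagonal.mem_antidiagonal] at hp
    exact w_add (by rw [← deg_add, add_comm, hp])
  have h2 : (2 : ℚ) * ∑ p ∈ Finset.HasAntidiagonal.antidiagonal m, w (deg m) (deg p.2)
      = 2 * ((Finset.HasAntidiagonal.antidiagonal m).card : ℚ) := by
    calc (2 : ℚ) * ∑ p ∈ Finset.HasAntidiagonal.antidiagonal m, w (deg m) (deg p.2)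
        = (∑ p ∈ Finset.HasAntidiagonal.antidiagonal m, w (deg m) (deg p.2))
          + ∑ p ∈ Finset.HasAntidiagonal.antidiagonal m, w (deg m) (deg p.1) := by rw [← hswap]; ring
      _ = ∑ p ∈ Finset.HasAntidiagonal.antidiagonal m, (w (deg m) (deg p.2) + w (deg m) (deg p.1)) := by
          rw [Finset.sum_add_distrib]
      _ = ∑ p ∈ Finset.HasAntidiagonal.antidiagonal m, (2 : ℚ) := Finset.sum_congr rfl key
      _ = 2 * ((Finset.HasAntidiagonal.antidiagonal m).card : ℚ) := by
          rw [Finset.sum_const]; push_cast; ring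
  exact mul_left_cancel₀ (two_ne_zero) h2

lemma inner_sum (m : Fin n →₀ ℕ) (p : (Fin n →₀ ℕ) × (Fin n →₀ ℕ))
    (hp : p ∈ Finset.HasAntidiagonal.antidiagonal m) :
    ∑ b ∈ Finset.range (deg m / 2 + 1),
      (((deg m - b : ℕ) : ℚ) - (b : ℚ) + 1) *
        ((if (deg p.1 : ℤ) = ((deg m - b : ℕ) : ℤ) then (1:ℚ) else 0)
            * (if (deg p.2 : ℤ) = (b : ℤ) then (1:ℚ) else 0)
          - (if (deg p.1 : ℤ) = ((deg m - b : ℕ) : ℤ) + 1 then (1:ℚ) else 0)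
            * (if (deg p.2 : ℤ) = (b : ℤ) - 1 then (1:ℚ) else 0))
      = w (deg m) (deg p.2) := by
  classical
  rw [Finset.HasAntidiagonal.mem_antidiagonal] at hp
  have hdeg : deg p.1 + deg p.2 = deg m := by rw [← deg_add, hp]
  set M := deg m with hM
  set d := deg p.2 with hd
  have step : ∀ b ∈ Finset.range (M / 2 + 1),
      (((M - b : ℕ) : ℚ) - (b : ℚ) + 1) *
        ((if (deg p.1 : ℤ) = ((M - b : ℕ) : ℤ) then (1:ℚ) else 0)
            * (if (deg p.2 : ℤ) = (b : ℤ) then (1:ℚ) else 0)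
          - (if (deg p.1 : ℤ) = ((M - b : ℕ) : ℤ) + 1 then (1:ℚ) else 0)
            * (if (deg p.2 : ℤ) = (b : ℤ) - 1 then (1:ℚ) else 0))
      = (if b = d then cQ M b else 0) - (if b = d + 1 then cQ M b else 0) := by
    intro b hb
    rw [Finset.mem_range, Nat.lt_succ_iff] at hb
    have e1 : ((deg p.1 : ℤ) = ((M - b : ℕ) : ℤ)) ↔ b = d := by omega
    have e2 : ((deg p.2 : ℤ) = (b : ℤ)) ↔ b = d := by omega
    have e3 : ((deg p.1 : ℤ) = ((M - b : ℕ) : ℤ) + 1) ↔ b = d + 1 := by omega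
    have e4 : ((deg p.2 : ℤ) = (b : ℤ) - 1) ↔ b = d + 1 := by omega
    rw [if_congr e1 rfl rfl, if_congr e2 rfl rfl, if_congr e3 rfl rfl, if_congr e4 rfl rfl]
    unfold cQ
    split_ifs with g1 g2 g3 <;> first | ring1 | omega
  rw [Finset.sum_congr rfl step, Finset.sum_sub_distrib,
    Finset.sum_ite_eq' (Finset.range (M / 2 + 1)) d (fun b => cQ M b),
    Finset.sum_ite_eq' (Finset.range (M / 2 + 1)) (d + 1) (fun b => cQ M b)]
  exact w_def' M d


/-- The summand of the right-hand side, coefficientwise. -/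
noncomputable def T (m : Fin n →₀ ℕ) (p : ℕ × ℕ) : ℚ :=
  ((p.1 : ℚ) - (p.2 : ℚ) + 1) * (N m p.1 p.2 - N m ((p.1 : ℤ) + 1) ((p.2 : ℤ) - 1))

lemma sum_T (m : Fin n →₀ ℕ) :
    ∑ b ∈ Finset.range (deg m / 2 + 1), T m (deg m - b, b)
      = ((Finset.HasAntidiagonal.antidiagonal m).card : ℚ) := by
  classical
  have expand : ∀ b ∈ Finset.range (deg m / 2 + 1),
      T m (deg m - b, b) = ∑ p ∈ Finset.HasAntidiagonal.antidiagonal m,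
        (((deg m - b : ℕ) : ℚ) - (b : ℚ) + 1) *
          ((if (deg p.1 : ℤ) = ((deg m - b : ℕ) : ℤ) then (1:ℚ) else 0)
              * (if (deg p.2 : ℤ) = (b : ℤ) then (1:ℚ) else 0)
            - (if (deg p.1 : ℤ) = ((deg m - b : ℕ) : ℤ) + 1 then (1:ℚ) else 0)
              * (if (deg p.2 : ℤ) = (b : ℤ) - 1 then (1:ℚ) else 0)) := by
    intro b _
    unfold T N
    rw [← Finset.sum_sub_distrib, Finset.mul_sum]
  rw [Finset.sum_congr rfl expand, Finset.sum_comm]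
  rw [Finset.sum_congr rfl (fun p hp => inner_sum m p hp)]
  exact sum_w m

lemma key (m : Fin n →₀ ℕ) :
    HasSum (fun p : {p : ℕ × ℕ // p.2 ≤ p.1} => T m p.1)
      ((Finset.HasAntidiagonal.antidiagonal m).card : ℚ) := by
  classical
  set s : Finset {p : ℕ × ℕ // p.2 ≤ p.1} :=
    ((Finset.range (deg m / 2 + 1)).image fun b => ((deg m - b, b) : ℕ × ℕ)).subtype _
    with hs
  have hvan : ∀ p ∉ s, T m p.1 = 0 := by
    intro p hp
    by_contra hT
    apply hp
    have hN : N m p.1.1 p.1.2 ≠ 0 ∨ N m ((p.1.1 : ℤ) + 1) ((p.1.2 : ℤ) - 1) ≠ 0 := by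
      by_contra hc
      push_neg at hc
      exact hT (by unfold T; rw [hc.1, hc.2]; ring)
    have hab : p.1.1 + p.1.2 = deg m := by
      rcases hN with hN | hN
      · have := mt (N_eq_zero (m := m)) (by simpa using hN)
        push_neg at this
        omega
      · have := mt (N_eq_zero (m := m)) (by simpa using hN)
        push_neg at this
        omega
    have hle : p.1.2 ≤ p.1.1 := p.2
    rw [hs, Finset.mem_subtype, Finset.mem_image]
    refine ⟨p.1.2, ?_, ?_⟩
    · rw [Finset.mem_range]; omega
    · have : deg m - p.1.2 = p.1.1 := by omega
      rw [this]
  have hsum := hasSum_sum_of_ne_finset_zero hvan (L := SummationFilter.unconditional _)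
  have hval : ∑ p ∈ s, T m p.1 = ((Finset.HasAntidiagonal.antidiagonal m).card : ℚ) := by
    rw [hs, Finset.sum_subtype_eq_sum_filter]
    rw [Finset.filter_true_of_mem (fun x hx => ?_)]
    · rw [Finset.sum_image (fun b1 h1 b2 h2 e => ?_)]
      · exact sum_T m
      · exact (Prod.mk.injEq _ _ _ _ ▸ e).2
    · rw [Finset.mem_image] at hx
      obtain ⟨b, hb, rfl⟩ := hx
      rw [Finset.mem_range] at hb
      show b ≤ deg m - b
      omega
  rwa [hval] at hsum

lemma coeff_ones_sq (m : Fin n →₀ ℕ) :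
    coeff m (ones n ^ 2) = ((Finset.HasAntidiagonal.antidiagonal m).card : ℚ) := by
  classical
  rw [sq, coeff_mul]
  simp [coeff_ones]

end SqTsumHsymAux

/-- `(Σ_{l ≥ 0} h_l)² = Σ_{λ = (λ₁ ≥ λ₂ ≥ 0)} (λ₁ - λ₂ + 1)·s_λ`,
the sum on the right running over all partitions with at most two parts. -/
theorem sq_tsum_hsym (n : ℕ) :
    (∑' l : ℕ, hsym n l) ^ 2 =
      ∑' p : {p : ℕ × ℕ // p.2 ≤ p.1},
        ((p.1.1 - p.1.2 + 1 : ℚ)) • schur2 n p.1.1 p.1.2 := by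
  classical
  have h1 : (∑' l : ℕ, hsym n l) = SqTsumHsymAux.ones n :=
    (SqTsumHsymAux.hasSum_hsym n).tsum_eq
  have h2 : HasSum (fun p : {p : ℕ × ℕ // p.2 ≤ p.1} =>
      ((p.1.1 - p.1.2 + 1 : ℚ)) • schur2 n p.1.1 p.1.2) (SqTsumHsymAux.ones n ^ 2) := by
    apply SqTsumHsymAux.hasSum_coeff
    intro m
    have hfun : (fun p : {p : ℕ × ℕ // p.2 ≤ p.1} =>
        coeff m (((p.1.1 - p.1.2 + 1 : ℚ)) • schur2 n p.1.1 p.1.2))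
        = fun p => SqTsumHsymAux.T m p.1 := by
      funext p
      rw [MvPowerSeries.coeff_smul, SqTsumHsymAux.coeff_schur2]
      rfl
    rw [hfun, SqTsumHsymAux.coeff_ones_sq]
    exact SqTsumHsymAux.key m
  rw [h1, h2.tsum_eq]
end

section
/- For each l ∈ ℤ_{≥0} and 0 ≤ k ≤ l, the coefficient q^{k(k-l+1)}·[l choose k]^{-1} lies in q^k(1 + qA₀), where A₀ is the subring of ℚ(q) of rational functions regular at q = 0. -/
noncomputable abbrev Kq : Type := RatFunc ℚ
noncomputable abbrev q : Kq := RatFunc.X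

/-- The balanced q-integer `[m] = (q^m - q^{-m})/(q - q^{-1})`. -/
noncomputable def qInt (m : ℕ) : Kq :=
  (q ^ m - q⁻¹ ^ m) / (q - q⁻¹)

/-- The q-factorial `[m]!`. -/
noncomputable def qFac (m : ℕ) : Kq :=
  ∏ k ∈ Finset.range m, qInt (k + 1)

/-- The q-binomial `[m choose k] = [m]!/([k]![m-k]!)`. -/
noncomputable def qBinom (m k : ℕ) : Kq :=
  qFac m / (qFac k * qFac (m - k))

/-- `A₀`: the subring of ℚ(q) of rational functions regular at `q = 0`. -/
def regAtZero : Set Kq := {f : Kq | Polynomial.eval 0 f.denom ≠ 0}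

open Polynomial

noncomputable abbrev am : ℚ[X] →+* Kq := algebraMap ℚ[X] (RatFunc ℚ)

lemma rep_mem {p s : ℚ[X]} (hs : s.eval 0 ≠ 0) :
    (am p / am s) ∈ regAtZero := by
  intro h0
  have hd := RatFunc.denom_div_dvd p s
  have hX : Polynomial.X ∣ (am p / am s).denom := by
    rw [Polynomial.X_dvd_iff, Polynomial.coeff_zero_eq_eval_zero]
    exact h0
  have : Polynomial.X ∣ s := hX.trans hd
  rw [Polynomial.X_dvd_iff, Polynomial.coeff_zero_eq_eval_zero] at this
  exact hs this

lemma mem_rep {f : Kq} (hf : f ∈ regAtZero) :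
    ∃ p s : ℚ[X], s.eval 0 ≠ 0 ∧ f = am p / am s :=
  ⟨f.num, f.denom, hf, (RatFunc.num_div_denom f).symm⟩

lemma poly_mem (p : ℚ[X]) : (am p : Kq) ∈ regAtZero := by
  show Polynomial.eval 0 (RatFunc.denom (am p)) ≠ 0
  rw [RatFunc.denom_algebraMap]
  simp

lemma q_mem : (q : Kq) ∈ regAtZero := by
  have := poly_mem (Polynomial.X (R := ℚ))
  rwa [RatFunc.algebraMap_X] at this

lemma am_ne_zero {s : ℚ[X]} (hs : s.eval 0 ≠ 0) : (am s : Kq) ≠ 0 :=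
  RatFunc.algebraMap_ne_zero (fun h => hs (by simp [h]))

lemma add_mem' {a b : Kq} (ha : a ∈ regAtZero) (hb : b ∈ regAtZero) :
    a + b ∈ regAtZero := by
  obtain ⟨p, s, hs, rfl⟩ := mem_rep ha
  obtain ⟨p', s', hs', rfl⟩ := mem_rep hb
  have h1 : (am s : Kq) ≠ 0 := am_ne_zero hs
  have h2 : (am s' : Kq) ≠ 0 := am_ne_zero hs'
  have : am p / am s + am p' / am s' = am (p * s' + p' * s) / am (s * s') := by
    field_simp
    simp only [map_mul, map_add]; ring
  rw [this]
  exact rep_mem (by simp [mul_ne_zero hs hs'])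

lemma mul_mem' {a b : Kq} (ha : a ∈ regAtZero) (hb : b ∈ regAtZero) :
    a * b ∈ regAtZero := by
  obtain ⟨p, s, hs, rfl⟩ := mem_rep ha
  obtain ⟨p', s', hs', rfl⟩ := mem_rep hb
  have : am p / am s * (am p' / am s') = am (p * p') / am (s * s') := by
    rw [div_mul_div_comm, ← map_mul, ← map_mul]
  rw [this]
  exact rep_mem (by simp [mul_ne_zero hs hs'])

lemma neg_mem' {a : Kq} (ha : a ∈ regAtZero) : -a ∈ regAtZero := by
  obtain ⟨p, s, hs, rfl⟩ := mem_rep ha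
  rw [← neg_div, ← map_neg]
  exact rep_mem hs

lemma one_add_ne {a : Kq} (ha : a ∈ regAtZero) : (1 : Kq) + q * a ≠ 0 := by
  obtain ⟨p, s, hs, rfl⟩ := mem_rep ha
  have h1 : (am s : Kq) ≠ 0 := am_ne_zero hs
  have key : (1 : Kq) + q * (am p / am s) = am (s + X * p) / am s := by
    rw [map_add, map_mul, RatFunc.algebraMap_X]
    field_simp
  rw [key]
  have : (s + X * p).eval 0 ≠ 0 := by simpa using hs
  exact div_ne_zero (am_ne_zero this) h1

lemma inv_one_add {a : Kq} (ha : a ∈ regAtZero) :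
    ∃ b ∈ regAtZero, ((1 : Kq) + q * a)⁻¹ = 1 + q * b := by
  obtain ⟨p, s, hs, rfl⟩ := mem_rep ha
  have h1 : (am s : Kq) ≠ 0 := am_ne_zero hs
  have hs2 : (s + X * p).eval 0 ≠ 0 := by simpa using hs
  have h2 : (am (s + X * p) : Kq) ≠ 0 := am_ne_zero hs2
  refine ⟨am (-p) / am (s + X * p), rep_mem hs2, ?_⟩
  refine inv_eq_of_mul_eq_one_right ?_
  rw [map_neg]
  have hq : q = am X := (RatFunc.algebraMap_X).symm
  rw [hq]
  have h2' : (am s + am X * am p : Kq) ≠ 0 := by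
    rw [← map_mul, ← map_add]; exact h2
  have h2'' : (am s + RatFunc.X * am p : Kq) ≠ 0 := by
    rwa [RatFunc.algebraMap_X] at h2'
  field_simp [h2'']
  simp only [map_mul, map_add]; ring



lemma qne : (q : Kq) ≠ 0 := RatFunc.X_ne_zero

lemma S_mul {x y : Kq} (hx : ∃ a ∈ regAtZero, x = 1 + q * a)
    (hy : ∃ b ∈ regAtZero, y = 1 + q * b) :
    ∃ c ∈ regAtZero, x * y = 1 + q * c := by
  obtain ⟨a, ha, rfl⟩ := hx
  obtain ⟨b, hb, rfl⟩ := hy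
  exact ⟨a + b + q * (a * b),
    add_mem' (add_mem' ha hb) (mul_mem' q_mem (mul_mem' ha hb)), by ring⟩

lemma hq2 : ((q : Kq) ^ 2 - 1) ≠ 0 := by
  have h : ((q : Kq) ^ 2 - 1) = am (X ^ 2 - 1) := by
    simp [map_sub, map_pow, RatFunc.algebraMap_X]
  rw [h]
  exact am_ne_zero (by simp)

lemma hqd : ((q : Kq) - q⁻¹) ≠ 0 := by
  intro h
  rw [sub_eq_zero] at h
  apply hq2
  rw [sub_eq_zero, sq]
  nth_rewrite 2 [h]
  rw [mul_inv_cancel₀ qne]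

lemma step (m : ℕ) : ∃ a ∈ regAtZero, q ^ m * qInt (m + 1) = 1 + q * a := by
  have e0 : ((q : Kq) ^ 2 - 1) = q * (q - q⁻¹) := by
    rw [mul_sub, mul_inv_cancel₀ qne, sq]
  have e1 : qInt (m + 1) * (q - q⁻¹) = q ^ (m + 1) - q⁻¹ ^ (m + 1) :=
    div_mul_cancel₀ _ hqd
  have key : q ^ m * qInt (m + 1) * (q ^ 2 - 1) = (q ^ 2) ^ (m + 1) - 1 := by
    calc q ^ m * qInt (m + 1) * (q ^ 2 - 1)
        = q ^ (m + 1) * (qInt (m + 1) * (q - q⁻¹)) := by rw [e0]; ring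
      _ = q ^ (m + 1) * (q ^ (m + 1) - q⁻¹ ^ (m + 1)) := by rw [e1]
      _ = (q ^ 2) ^ (m + 1) - 1 := by
          have h1 : (q : Kq) ^ (m + 1) * q⁻¹ ^ (m + 1) = 1 := by
            rw [← mul_pow, mul_inv_cancel₀ qne, one_pow]
          rw [mul_sub, h1]
          ring
  have geo : ((∑ i ∈ Finset.range (m + 1), ((q : Kq) ^ 2) ^ i)) * (q ^ 2 - 1)
      = (q ^ 2) ^ (m + 1) - 1 := geom_sum_mul _ _
  have main : q ^ m * qInt (m + 1) = ∑ i ∈ Finset.range (m + 1), ((q : Kq) ^ 2) ^ i :=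
    mul_right_cancel₀ hq2 (key.trans geo.symm)
  have hsum : (∑ i ∈ Finset.range m, ((q : Kq) ^ 2) ^ i)
      = am (∑ i ∈ Finset.range m, (X ^ 2) ^ i) := by
    rw [map_sum]
    simp [map_pow, RatFunc.algebraMap_X]
  refine ⟨q * ∑ i ∈ Finset.range m, ((q : Kq) ^ 2) ^ i,
    mul_mem' q_mem (hsum ▸ poly_mem _), ?_⟩
  rw [main, geom_sum_succ]
  ring

lemma fac_lem (m : ℕ) :
    ∃ a ∈ regAtZero, q ^ (∑ i ∈ Finset.range m, i) * qFac m = 1 + q * a := by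
  induction m with
  | zero =>
    refine ⟨0, by simpa using poly_mem 0, by simp [qFac]⟩
  | succ n ih =>
    have hsplit : q ^ (∑ i ∈ Finset.range (n + 1), i) * qFac (n + 1)
        = (q ^ (∑ i ∈ Finset.range n, i) * qFac n) * (q ^ n * qInt (n + 1)) := by
      rw [Finset.sum_range_succ, qFac, qFac, Finset.prod_range_succ, pow_add]
      ring
    rw [hsplit]
    exact S_mul ih (step n)

lemma ee_add (k d : ℕ) : (∑ i ∈ Finset.range (k + d), i)
    = (∑ i ∈ Finset.range k, i) + (∑ i ∈ Finset.range d, i) + k * d := by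
  induction d with
  | zero => simp
  | succ n ih =>
    rw [show k + (n + 1) = (k + n) + 1 from rfl, Finset.sum_range_succ, ih,
      Finset.sum_range_succ]
    ring

/-- for `l ∈ ℤ_{≥0}` and `0 ≤ k ≤ l`,
`q^{k(k-l+1)}·[l choose k]⁻¹ ∈ q^k(1 + qA₀)`. -/
theorem coeff_mem_qk_one_add_qA0 (l k : ℕ) (hk : k ≤ l) :
    ∃ a ∈ regAtZero,
      q ^ ((k : ℤ) * ((k : ℤ) - l + 1)) * (qBinom l k)⁻¹ = q ^ k * (1 + q * a) := by
  set d := l - k with hdd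
  have hl : l = k + d := (Nat.add_sub_cancel' hk).symm
  obtain ⟨a, ha, hA⟩ := fac_lem l
  obtain ⟨b, hb, hB⟩ := fac_lem k
  obtain ⟨c, hc, hC⟩ := fac_lem d
  set el := ∑ i ∈ Finset.range l, i with hel
  set ek := ∑ i ∈ Finset.range k, i with hek
  set ed := ∑ i ∈ Finset.range d, i with hed
  have hsum : el = ek + ed + k * d := by rw [hel, hl]; exact ee_add k d
  -- nonvanishing of the factorials
  have hAne : (1 : Kq) + q * a ≠ 0 := one_add_ne ha
  have hBne : (1 : Kq) + q * b ≠ 0 := one_add_ne hb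
  have hCne : (1 : Kq) + q * c ≠ 0 := one_add_ne hc
  have hFl : qFac l ≠ 0 := by
    intro h; apply hAne; rw [← hA, h, mul_zero]
  have hFk : qFac k ≠ 0 := by
    intro h; apply hBne; rw [← hB, h, mul_zero]
  have hFd : qFac d ≠ 0 := by
    intro h; apply hCne; rw [← hC, h, mul_zero]
  -- combined unit
  obtain ⟨d1, hd1, hD1⟩ := S_mul ⟨b, hb, rfl⟩ ⟨c, hc, rfl⟩
  obtain ⟨d2, hd2, hD2⟩ := inv_one_add ha
  obtain ⟨d3, hd3, hD3⟩ := S_mul ⟨d1, hd1, rfl⟩ ⟨d2, hd2, rfl⟩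
  refine ⟨d3, hd3, ?_⟩
  have hrhs : (1 : Kq) + q * d3 = (1 + q * b) * (1 + q * c) * (1 + q * a)⁻¹ := by
    rw [← hD3, hD1, hD2]
  -- the power identity
  have hz : ((k : ℤ) * ((k : ℤ) - l + 1)) = ((k + ek + ed : ℕ) : ℤ) - (el : ℤ) := by
    have hlz : (l : ℤ) = (k : ℤ) + d := by exact_mod_cast hl
    rw [hlz, hsum]
    push_cast
    ring
  have hzz : (q : Kq) ^ ((k : ℤ) * ((k : ℤ) - l + 1))
      = q ^ k * q ^ ek * q ^ ed * ((q : Kq) ^ el)⁻¹ := by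
    rw [hz, zpow_sub₀ qne, zpow_natCast, zpow_natCast, pow_add, pow_add,
      div_eq_mul_inv]
  rw [hzz, hrhs, ← hA, ← hB, ← hC, qBinom, ← hdd]
  have hqel : (q : Kq) ^ el ≠ 0 := pow_ne_zero _ qne
  field_simp
end
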